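/- Let S be a CA-AG-groupoid, i.e., a magma satisfying the left invertive law and cyclic associativity. Then S is right commutative (a·(b·c) = a·(c·b) for all a,b,c) if and only if S is an AG**-groupoid (a·(b·c) = b·(a·c) for all a,b,c). -/
import Mathlib

theorem CA_AG_groupoid_right_commutative_iff_AG_star_star {S : Type*} [Mul S]
    (li : ∀ a b c : S, (a * b) * c = (c * b) * a)
    (ca : ∀ a b c : S, a * (b * c) = c * (a * b)) :
    (∀ a b c : S, a * (b * c) = a * (c * b)) ↔
    (∀ a b c : S, a * (b * c) = b * (a * c)) := by
  constructor
  · intro rc a b c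
    rw [rc a b c, ca a c b]
  · intro h a b c
    rw [h a b c, ca a c b]
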